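/- Let H be a complex Hilbert space, A : H → H a bounded self-adjoint operator, and (e_i)_{i ∈ ι} a Hilbert (orthonormal) basis of H consisting of eigenvectors of A: A e_i = λ_i e_i with λ_i ∈ ℝ. Assume there is δ > 0 such that |λ_i − λ_j| ≥ δ whenever λ_i ≠ λ_j, and that each eigenvalue is simple (λ_i ≠ λ_j for i ≠ j). Let ω ∈ ℝ, 0 < ε < δ, and u ∈ H with ‖u‖ = 1 and ‖A u − ω u‖ ≤ ε. Then there exists an index i with |ω − λ_i| ≤ ε and a real θ such that ‖u − e^{iθ} e_i‖ ≤ 2ε/(δ − ε). -/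

import Mathlib

open Filter
open scoped BigOperators Topology InnerProductSpace

noncomputable section

set_option maxHeartbeats 1000000 in
/-- Quasi-eigenvectors of a bounded self-adjoint operator diagonalized by a Hilbert basis
with simple, `δ`-separated eigenvalues: if `‖Au - ωu‖ ≤ ε < δ` for a unit vector `u`, then
`u` is `2ε/(δ-ε)`-close to a phase rotation of an eigenvector with eigenvalue `ε`-close
to `ω`. -/
theorem statement19 {H : Type*} [NormedAddCommGroup H] [InnerProductSpace ℂ H]
    [CompleteSpace H] {ι : Type*} (A : H →L[ℂ] H)
    (hA : ∀ x y : H, (inner ℂ (A x) y : ℂ) = inner ℂ x (A y))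
    (e : HilbertBasis ι ℂ H) (lam : ι → ℝ)
    (heig : ∀ i : ι, A (e i) = (lam i : ℂ) • e i)
    (δ : ℝ) (hδ : 0 < δ)
    (hsep : ∀ i j : ι, lam i ≠ lam j → δ ≤ |lam i - lam j|)
    (hsimple : ∀ i j : ι, i ≠ j → lam i ≠ lam j)
    (ω ε : ℝ) (hε : 0 < ε) (hεδ : ε < δ)
    (u : H) (hu : ‖u‖ = 1) (hAu : ‖A u - (ω : ℂ) • u‖ ≤ ε) :
    ∃ i : ι, |ω - lam i| ≤ ε ∧
      ∃ θ : ℝ, ‖u - Complex.exp (θ * Complex.I) • e i‖ ≤ 2 * ε / (δ - ε) := by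
  classical
  have hδε : (0:ℝ) < δ - ε := by linarith
  have hp : (0:ℝ) < (2 : ENNReal).toReal := by norm_num
  have key : ∀ x : H, Summable (fun i => ‖e.repr x i‖^2) ∧
      (∑' i, ‖e.repr x i‖^2) = ‖x‖^2 := by
    intro x
    have h1 := lp.norm_rpow_eq_tsum hp (e.repr x)
    have h2 := (lp.memℓp (e.repr x)).summable hp
    have h3 : (2 : ENNReal).toReal = ((2:ℕ):ℝ) := by norm_num
    rw [h3] at h1 h2
    simp only [Real.rpow_natCast] at h1 h2
    rw [e.repr.norm_map] at h1
    exact ⟨h2, h1.symm⟩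
  set w : H := A u - (ω : ℂ) • u with hwdef
  have hcoef : ∀ i, e.repr w i = ((lam i : ℂ) - ω) * e.repr u i := by
    intro i
    have hcu : (e.repr u i : ℂ) = inner ℂ (e i) u := e.repr_apply_apply u i
    have h1 : (inner ℂ (e i) (A u) : ℂ) = (lam i : ℂ) * inner ℂ (e i) u := by
      rw [← hA, heig, inner_smul_left]
      simp [Complex.conj_ofReal]
    have h2 : (e.repr w i : ℂ) = inner ℂ (e i) w := e.repr_apply_apply w i
    rw [h2, hwdef, inner_sub_right, inner_smul_right, h1, hcu]
    ring
  obtain ⟨hsumw, htsumw⟩ := key w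
  obtain ⟨hsumu, htsumu⟩ := key u
  rw [hu, one_pow] at htsumu
  have hfg : ∀ i, ‖e.repr w i‖^2 = (lam i - ω)^2 * ‖e.repr u i‖^2 := by
    intro i
    rw [hcoef i, norm_mul]
    have h : ‖((lam i : ℂ) - ω)‖ = |lam i - ω| := by
      rw [show ((lam i : ℂ) - (ω:ℂ)) = ((lam i - ω : ℝ) : ℂ) by push_cast; ring,
        Complex.norm_real, Real.norm_eq_abs]
    rw [h, mul_pow, sq_abs]
  have hwnorm : ∑' i, ‖e.repr w i‖^2 ≤ ε^2 := by
    rw [htsumw]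
    exact pow_le_pow_left₀ (norm_nonneg _) hAu 2
  have hex : ∃ i, e.repr u i ≠ 0 ∧ |ω - lam i| ≤ ε := by
    by_contra hcon
    push_neg at hcon
    have hle : ∀ i, ε^2 * ‖e.repr u i‖^2 ≤ ‖e.repr w i‖^2 := by
      intro i
      by_cases h : e.repr u i = 0
      · rw [hfg, h]; simp
      · have h2 : ε < |lam i - ω| := by rw [abs_sub_comm]; exact hcon i h
        have h4 : ε^2 ≤ (lam i - ω)^2 := by
          nlinarith [sq_abs (lam i - ω), abs_nonneg (lam i - ω)]
        rw [hfg]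
        exact mul_le_mul_of_nonneg_right h4 (sq_nonneg _)
    obtain ⟨i0, hi0⟩ : ∃ i, e.repr u i ≠ 0 := by
      by_contra hall
      push_neg at hall
      have heq : (fun i => ‖e.repr u i‖^2) = fun _ => (0:ℝ) := by
        funext i; rw [hall i]; simp
      rw [heq, tsum_zero] at htsumu
      norm_num at htsumu
    have hstrict : ε^2 * ‖e.repr u i0‖^2 < ‖e.repr w i0‖^2 := by
      have h2 : ε < |lam i0 - ω| := by rw [abs_sub_comm]; exact hcon i0 hi0
      have hc : 0 < ‖e.repr u i0‖^2 := pow_pos (norm_pos_iff.mpr hi0) 2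
      have h4 : ε^2 < (lam i0 - ω)^2 := by
        nlinarith [sq_abs (lam i0 - ω), abs_nonneg (lam i0 - ω)]
      rw [hfg]
      exact mul_lt_mul_of_pos_right h4 hc
    have hlt := Summable.tsum_lt_tsum hle hstrict (hsumu.mul_left (ε^2)) hsumw
    rw [tsum_mul_left, htsumu, mul_one] at hlt
    linarith
  obtain ⟨i, hci, hωi⟩ := hex
  refine ⟨i, hωi, (e.repr u i).arg, ?_⟩
  set z : ℂ := Complex.exp ((e.repr u i).arg * Complex.I) with hzdef
  have hz1 : ‖z‖ = 1 := by
    rw [hzdef, Complex.norm_exp_ofReal_mul_I]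
  have hcz : (e.repr u i : ℂ) = (‖e.repr u i‖ : ℂ) * z := by
    rw [hzdef]
    exact (Complex.norm_mul_exp_arg_mul_I (e.repr u i)).symm
  have hei : ‖e i‖ = 1 := e.orthonormal.1 i
  set v : H := u - e.repr u i • e i with hvdef
  have hvcoef : ∀ j, e.repr v j = if j = i then 0 else e.repr u j := by
    intro j
    have h0 : e.repr v = e.repr u - e.repr u i • e.repr (e i) := by
      rw [hvdef, map_sub, map_smul]
    have h1 : e.repr v j = e.repr u j - e.repr u i * (e.repr (e i)) j := by
      rw [h0, lp.coeFn_sub, lp.coeFn_smul]; rfl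
    rw [h1, e.repr_self]
    by_cases h : j = i
    · subst h; simp [lp.single_apply]
    · simp [lp.single_apply, h]
  obtain ⟨hsumv, htsumv⟩ := key v
  have htail : ∀ j, (δ-ε)^2 * ‖e.repr v j‖^2 ≤ ‖e.repr w j‖^2 := by
    intro j
    rw [hvcoef j]
    by_cases h : j = i
    · rw [if_pos h]
      simpa using sq_nonneg (‖e.repr w j‖)
    · rw [if_neg h, hfg]
      by_cases h0 : e.repr u j = 0
      · rw [h0]; simp
      · have h1 : δ ≤ |lam j - lam i| := hsep j i (hsimple j i h)
        have h2 : |lam j - lam i| ≤ |lam j - ω| + |ω - lam i| := abs_sub_le _ _ _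
        have h3 : δ - ε ≤ |lam j - ω| := by linarith
        have h4 : (δ-ε)^2 ≤ (lam j - ω)^2 := by
          nlinarith [sq_abs (lam j - ω), abs_nonneg (lam j - ω)]
        exact mul_le_mul_of_nonneg_right h4 (sq_nonneg _)
  have hvbound : (δ-ε)^2 * ‖v‖^2 ≤ ε^2 := by
    have h := Summable.tsum_le_tsum htail (hsumv.mul_left ((δ-ε)^2)) hsumw
    rw [tsum_mul_left, htsumv] at h
    linarith
  have hvle : ‖v‖ ≤ ε / (δ - ε) := by
    rw [le_div_iff₀ hδε]
    nlinarith [norm_nonneg v, mul_nonneg (norm_nonneg v) hδε.le]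
  have hgi : ‖e.repr u i‖^2 ≤ 1 := by
    have h := Summable.le_tsum hsumu i (fun j _ => by positivity)
    rw [htsumu] at h; linarith
  have hci1 : ‖e.repr u i‖ ≤ 1 := by nlinarith [norm_nonneg (e.repr u i)]
  have hsplit : ‖v‖^2 = 1 - ‖e.repr u i‖^2 := by
    have h1 := Summable.tsum_eq_add_tsum_ite hsumu i
    have h2 : (∑' j, ‖e.repr v j‖^2) = ∑' j, if j = i then 0 else ‖e.repr u j‖^2 :=
      tsum_congr (fun j => by rw [hvcoef j]; by_cases h : j = i <;> simp [h])
    rw [← htsumv, h2]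
    rw [htsumu] at h1
    linarith
  have hr2 : ‖v‖^2 ≤ (ε/(δ-ε))^2 := by
    rw [div_pow, le_div_iff₀ (by positivity)]
    linarith [hvbound]
  have hcinorm : 1 - ‖e.repr u i‖ ≤ (ε/(δ-ε))^2 := by
    nlinarith [norm_nonneg (e.repr u i)]
  have hczn : ‖(e.repr u i : ℂ) - z‖ = 1 - ‖e.repr u i‖ := by
    have h : (e.repr u i : ℂ) - z = ((‖e.repr u i‖ - 1 : ℝ) : ℂ) * z := by
      rw [Complex.ofReal_sub, sub_mul, ← hcz, Complex.ofReal_one, one_mul]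
    rw [h, norm_mul, hz1, mul_one, Complex.norm_real, Real.norm_eq_abs,
      abs_of_nonpos (by linarith)]
    ring
  have hdiff : ‖u - z • e i‖ ≤ ‖v‖ + (1 - ‖e.repr u i‖) := by
    have h : u - z • e i = v + ((e.repr u i : ℂ) - z) • e i := by
      rw [hvdef, sub_smul]; abel
    rw [h]
    refine (norm_add_le _ _).trans ?_
    rw [norm_smul, hei, mul_one, hczn]
  by_cases hcase : δ ≤ 2*ε
  · have h2 : ‖u - z • e i‖ ≤ 2 := by
      refine (norm_sub_le _ _).trans ?_
      rw [hu, norm_smul, hz1, hei]; norm_num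
    have h3 : (2:ℝ) ≤ 2*ε/(δ-ε) := by
      rw [le_div_iff₀ hδε]; linarith
    linarith
  · push_neg at hcase
    have hr1 : ε/(δ-ε) ≤ 1 := by rw [div_le_one hδε]; linarith
    have hrsq : (ε/(δ-ε))^2 ≤ ε/(δ-ε) := by
      nlinarith [div_nonneg hε.le hδε.le]
    have hfin : ‖u - z • e i‖ ≤ ε/(δ-ε) + ε/(δ-ε) := by linarith
    have heq : 2*ε/(δ-ε) = ε/(δ-ε) + ε/(δ-ε) := by ring
    linarith
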